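/- Let ℓ be a real number and r an integer with 1 ≤ r ≤ ℓ, and define P(ℓ,r) = Σ 1/b, the sum over all integers b with ℓ/2 < b ≤ ℓ and r dividing b. Then |P(ℓ,r) − ln(2)/r| ≤ 1/ℓ. -/

import Mathlib

open scoped Classical

private lemma log_succ_sub_le {x : ℝ} (hx : 0 < x) :
    Real.log (x + 1) - Real.log x ≤ 1 / x := by
  have h := Real.log_le_sub_one_of_pos (show (0:ℝ) < (x + 1) / x by positivity)
  rw [Real.log_div (by positivity) hx.ne'] at h
  have h2 : (x + 1) / x - 1 = 1 / x := by field_simp; ring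
  linarith

private lemma le_log_succ_sub {x : ℝ} (hx : 0 < x) :
    1 / (x + 1) ≤ Real.log (x + 1) - Real.log x := by
  have h := Real.log_le_sub_one_of_pos (show (0:ℝ) < x / (x + 1) by positivity)
  rw [Real.log_div hx.ne' (by positivity)] at h
  have h2 : x / (x + 1) - 1 = -(1 / (x + 1)) := by field_simp; ring
  linarith

private lemma sum_Ioc_le (m : ℕ) (hm : 1 ≤ m) (n : ℕ) (hn : m ≤ n) :
    ∑ k ∈ Finset.Ioc m n, (1 : ℝ) / k ≤ Real.log n - Real.log m := by
  induction n, hn using Nat.le_induction with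
  | base => simp
  | succ n hn ih =>
    rw [Finset.sum_Ioc_succ_top hn]
    have hn0 : (0:ℝ) < n := by
      have : 1 ≤ n := le_trans hm hn
      exact_mod_cast this
    have := le_log_succ_sub hn0
    push_cast
    push_cast at ih
    linarith

private lemma le_sum_Ioc (m : ℕ) (n : ℕ) (hn : m ≤ n) :
    Real.log (n + 1) - Real.log (m + 1) ≤ ∑ k ∈ Finset.Ioc m n, (1 : ℝ) / k := by
  induction n, hn using Nat.le_induction with
  | base => simp
  | succ n hn ih =>
    rw [Finset.sum_Ioc_succ_top hn]
    have hn0 : (0:ℝ) < (n : ℝ) + 1 := by positivity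
    have := log_succ_sub_le hn0
    push_cast
    push_cast at ih
    linarith

private lemma aux1 (M : ℝ) (hM : 1 ≤ M) :
    Real.log 2 + Real.log (M + 1) - Real.log (2 * M + 1) ≤ 1 / (2 * M + 1) := by
  have h1 : (0:ℝ) < 2 * M + 1 := by linarith
  have h2 : (0:ℝ) < M + 1 := by linarith
  have h := Real.log_le_sub_one_of_pos (show (0:ℝ) < 2 * (M + 1) / (2 * M + 1) by positivity)
  rw [Real.log_div (by positivity) h1.ne', Real.log_mul two_ne_zero h2.ne'] at h
  have h3 : 2 * (M + 1) / (2 * M + 1) - 1 = 1 / (2 * M + 1) := by field_simp; ring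
  linarith

private lemma aux2 (M : ℝ) (hM : 1 ≤ M) :
    1 / (2 * M + 2) ≤ Real.log 2 + Real.log (M + 1) - Real.log (2 * M + 1) := by
  have h1 : (0:ℝ) < 2 * M + 1 := by linarith
  have h2 : (0:ℝ) < M + 1 := by linarith
  have h := Real.log_le_sub_one_of_pos (show (0:ℝ) < (2 * M + 1) / (2 * (M + 1)) by positivity)
  rw [Real.log_div h1.ne' (by positivity), Real.log_mul two_ne_zero h2.ne'] at h
  have h3 : (2 * M + 1) / (2 * (M + 1)) - 1 = -(1 / (2 * M + 2)) := by field_simp; ring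
  linarith

theorem harmonic_like_sum_P (ℓ : ℝ) (r : ℕ) (hr : 1 ≤ r) (hrℓ : (r : ℝ) ≤ ℓ) :
    |(∑ b ∈ (Finset.Icc 1 ⌊ℓ⌋₊).filter (fun (b : ℕ) => ℓ / 2 < (b : ℝ) ∧ r ∣ b),
        (1 : ℝ) / b) - Real.log 2 / r| ≤ 1 / ℓ := by
  have hr0 : (0:ℝ) < r := by exact_mod_cast Nat.pos_of_ne_zero (by omega)
  have hℓ0 : (0:ℝ) < ℓ := lt_of_lt_of_le hr0 hrℓ
  set x : ℝ := ℓ / r with hxdef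
  have hx0 : (0:ℝ) < x := by positivity
  have hx1 : 1 ≤ x := (one_le_div hr0).2 hrℓ
  set n : ℕ := ⌊x⌋₊ with hndef
  have hn1 : 1 ≤ n := Nat.le_floor (by exact_mod_cast hx1)
  have hnx : (n : ℝ) ≤ x := Nat.floor_le hx0.le
  have hxn : x < n + 1 := Nat.lt_floor_add_one x
  set m : ℕ := n / 2 with hmdef
  -- characterize membership
  have hmfloor : m = ⌊x / 2⌋₊ := by
    rw [hmdef, hndef]
    exact (Nat.floor_div_ofNat x 2).symm
  have hkle : ∀ k : ℕ, (r * k ≤ ⌊ℓ⌋₊ ↔ k ≤ n) := by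
    intro k
    rw [Nat.le_floor_iff hℓ0.le, hndef, Nat.le_floor_iff hx0.le, hxdef,
      le_div_iff₀ hr0]
    push_cast
    constructor <;> intro h <;> nlinarith
  have hklt : ∀ k : ℕ, (ℓ / 2 < (r * k : ℕ) ↔ m < k) := by
    intro k
    rw [hmfloor, Nat.floor_lt (by positivity)]
    push_cast
    rw [hxdef, div_div, div_lt_iff₀ (by positivity), div_lt_iff₀ (by positivity)]
    constructor <;> intro h <;> nlinarith
  have key : (Finset.Icc 1 ⌊ℓ⌋₊).filter (fun (b : ℕ) => ℓ / 2 < (b : ℝ) ∧ r ∣ b)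
      = (Finset.Ioc m n).image (fun k => r * k) := by
    ext b
    simp only [Finset.mem_filter, Finset.mem_Icc, Finset.mem_image, Finset.mem_Ioc]
    constructor
    · rintro ⟨⟨hb1, hbN⟩, hbl, k, rfl⟩
      exact ⟨k, ⟨(hklt k).1 hbl, (hkle k).1 hbN⟩, rfl⟩
    · rintro ⟨k, ⟨hk1, hk2⟩, rfl⟩
      refine ⟨⟨?_, (hkle k).2 hk2⟩, (hklt k).2 hk1, ⟨k, rfl⟩⟩
      have : 0 < k := by omega
      exact Nat.one_le_iff_ne_zero.2 (by positivity)
  rw [key, Finset.sum_image (fun a _ b _ h => Nat.eq_of_mul_eq_mul_left (by omega) h)]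
  have hsum : ∑ k ∈ Finset.Ioc m n, (1 : ℝ) / (r * k : ℕ)
      = (1 / r) * ∑ k ∈ Finset.Ioc m n, (1 : ℝ) / k := by
    rw [Finset.mul_sum]
    refine Finset.sum_congr rfl fun k _ => ?_
    push_cast
    rw [one_div_mul_one_div]
  rw [hsum]
  set S : ℝ := ∑ k ∈ Finset.Ioc m n, (1 : ℝ) / k with hSdef
  suffices h : |S - Real.log 2| ≤ 1 / x by
    have he : (1 / (r:ℝ)) * S - Real.log 2 / r = (S - Real.log 2) / r := by ring
    rw [he, abs_div, abs_of_pos hr0]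
    have h1x : 1 / x = r / ℓ := by rw [hxdef, one_div_div]
    rw [h1x] at h
    calc |S - Real.log 2| / r ≤ (r / ℓ) / r := by gcongr
      _ = 1 / ℓ := by field_simp
  have h1x : 1 / ((n:ℝ) + 1) ≤ 1 / x := one_div_le_one_div_of_le hx0 hxn.le
  rcases Nat.eq_zero_or_pos m with hm0 | hm1
  · -- small case : n = 1
    have hn1' : n = 1 := by omega
    have hS1 : S = 1 := by
      rw [hSdef, hm0, hn1']
      norm_num
    have hlog1 : (0.6931471803 : ℝ) < Real.log 2 := Real.log_two_gt_d9
    have hlog2 : Real.log 2 < 0.6931471808 := Real.log_two_lt_d9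
    have hx2 : x < 2 := by rw [hn1'] at hxn; push_cast at hxn; linarith
    have : (1:ℝ) / 2 < 1 / x := one_div_lt_one_div_of_lt hx0 hx2
    rw [hS1, abs_le]
    constructor <;> linarith
  · have hM1 : (1:ℝ) ≤ (m:ℝ) := by exact_mod_cast hm1
    have hm0' : (m:ℝ) ≠ 0 := by positivity
    have hcase : n = 2 * m ∨ n = 2 * m + 1 := by omega
    have h1xpos : (0:ℝ) < 1 / x := by positivity
    rcases hcase with hc | hc
    · -- n = 2m
      have hup := sum_Ioc_le m hm1 (2 * m) (by omega)
      have hlow := le_sum_Ioc m (2 * m) (by omega)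
      rw [← hc] at hup hlow
      rw [← hSdef] at hup hlow
      have hlogsplit : Real.log (n : ℝ) = Real.log 2 + Real.log (m : ℝ) := by
        rw [hc]; push_cast
        rw [Real.log_mul two_ne_zero hm0']
      have ha1 := aux1 (m : ℝ) hM1
      have hcast : ((n:ℝ) + 1) = 2 * (m:ℝ) + 1 := by rw [hc]; push_cast; ring
      rw [hcast] at h1x
      have hlowcast : Real.log (2 * (m:ℝ) + 1) - Real.log ((m:ℝ) + 1) ≤ S := by
        have : ((n:ℝ) + 1) = 2 * (m:ℝ) + 1 := hcast
        calc Real.log (2 * (m:ℝ) + 1) - Real.log ((m:ℝ) + 1)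
            = Real.log ((n:ℝ) + 1) - Real.log ((m:ℝ) + 1) := by rw [this]
          _ ≤ S := hlow
      rw [abs_le]
      constructor
      · -- log 2 - S ≤ 1/x
        have : Real.log 2 - S ≤ 1 / (2 * (m:ℝ) + 1) := by linarith
        linarith
      · -- S ≤ log 2 + 1/x
        have : S ≤ Real.log 2 := by linarith
        linarith
    · -- n = 2m + 1
      have hlow := le_sum_Ioc m (2 * m + 1) (by omega)
      rw [← hc, ← hSdef] at hlow
      have hlogsplit : Real.log ((n:ℝ) + 1) = Real.log 2 + Real.log ((m:ℝ) + 1) := by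
        rw [hc]; push_cast
        rw [show (2 * (m:ℝ) + 1 + 1) = 2 * ((m:ℝ) + 1) by ring,
          Real.log_mul two_ne_zero (by positivity)]
      have hlow2 : Real.log 2 ≤ S := by
        rw [hlogsplit] at hlow; linarith
      -- upper bound
      have hsplit : (∑ k ∈ Finset.Ioc m (m + 1), (1:ℝ) / k)
          + ∑ k ∈ Finset.Ioc (m + 1) (2 * m + 1), (1:ℝ) / k = S := by
        rw [hSdef, hc]
        exact Finset.sum_Ioc_consecutive _ (by omega) (by omega)
      have hsingle : Finset.Ioc m (m + 1) = {m + 1} := by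
        ext k; simp [Nat.lt_succ_iff]
      have hup := sum_Ioc_le (m + 1) (by omega) (2 * m + 1) (by omega)
      have ha2 := aux2 (m : ℝ) hM1
      have hScast : S = 1 / ((m:ℝ) + 1) + ∑ k ∈ Finset.Ioc (m + 1) (2 * m + 1), (1:ℝ) / k := by
        rw [← hsplit, hsingle]
        push_cast
        simp
      have hupcast : (∑ k ∈ Finset.Ioc (m + 1) (2 * m + 1), (1:ℝ) / k)
          ≤ Real.log (2 * (m:ℝ) + 1) - Real.log ((m:ℝ) + 1) := by
        have := hup
        push_cast at this
        linarith
      have hdiff : (1:ℝ) / ((m:ℝ) + 1) - 1 / (2 * (m:ℝ) + 2) = 1 / (2 * (m:ℝ) + 2) := by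
        have hne : ((m:ℝ) + 1) ≠ 0 := by positivity
        have hne2 : (2 * (m:ℝ) + 2) ≠ 0 := by positivity
        rw [div_sub_div _ _ hne hne2, div_eq_div_iff (by positivity) hne2]
        ring
      have hcast : ((n:ℝ) + 1) = 2 * (m:ℝ) + 2 := by rw [hc]; push_cast; ring
      rw [hcast] at h1x
      rw [abs_le]
      constructor
      · linarith
      · -- S ≤ log 2 + 1/x
        have : S ≤ Real.log 2 + 1 / (2 * (m:ℝ) + 2) := by
          rw [hScast]
          linarith
        linarith
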